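/- arXiv:1902.08777 — 2 statements merged into one kernel-verified Lean document; each statement's English description precedes it below -/
import Mathlib

section
/- Let G be a nilpotent group of class at most n (n > 1). Then for all integers a₁,…,a_n and all g₁,…,g_n ∈ G, [g₁^{a₁}, g₂^{a₂}, …, g_n^{a_n}] = [g₁,…,g_n]^{a₁a₂⋯a_n}. -/
/-- The commutator `[a,b] = a⁻¹b⁻¹ab`. -/
def gcomm {G : Type*} [Group G] (a b : G) : G := a⁻¹ * b⁻¹ * a * b

/-- Conjugation `g^h = h⁻¹gh`. -/
def gconj {G : Type*} [Group G] (g h : G) : G := h⁻¹ * g * h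

/-- Left-normed commutator `[x, l₁, l₂, …]`. -/
def commList {G : Type*} [Group G] (x : G) (l : List G) : G := l.foldl gcomm x

/-- Left-normed commutator of a list: `[g₁, …, g_k]` (equal to `1` for the empty list). -/
def listComm {G : Type*} [Group G] : List G → G
  | [] => 1
  | x :: xs => commList x xs

section Aux

variable {G : Type*} [Group G]

lemma listComm_cons (x : G) (xs : List G) : listComm (x :: xs) = commList x xs := rfl

open scoped commutatorElement in
lemma gcomm_mem {j : ℕ} {x : G} (hx : x ∈ (⊤ : Subgroup G).lowerCentralSeries j) (y : G) :
    gcomm x y ∈ (⊤ : Subgroup G).lowerCentralSeries (j+1) := by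
  have h : gcomm x y = ⁅x⁻¹, y⁻¹⁆ := by
    simp [gcomm, commutatorElement_def, mul_assoc]
  rw [h, show (⊤ : Subgroup G).lowerCentralSeries (j+1) = ⁅(⊤ : Subgroup G).lowerCentralSeries j, (⊤ : Subgroup G)⁆ from rfl]
  exact Subgroup.commutator_mem_commutator (inv_mem hx) (Subgroup.mem_top _)

lemma pow_mul_mem (N : Subgroup G) [N.Normal] {z : G} (hz : z ∈ N) (u : G) (b : ℤ) :
    ∃ z' ∈ N, (u*z)^b = u^b * z' := by
  refine ⟨(u^b)⁻¹ * (u*z)^b, ?_, by group⟩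
  rw [← QuotientGroup.eq_one_iff]
  have hz1 : ((z : G) : G ⧸ N) = 1 := (QuotientGroup.eq_one_iff z).mpr hz
  simp only [QuotientGroup.mk_mul, QuotientGroup.mk_zpow, QuotientGroup.mk_inv, hz1]
  group

lemma comm_zpow_right {j : ℕ} {c : G} (hc : c ∈ (⊤ : Subgroup G).lowerCentralSeries j) (w : G) (b : ℤ) :
    ∃ z ∈ (⊤ : Subgroup G).lowerCentralSeries (j+2), gcomm c (w^b) = (gcomm c w)^b * z := by
  induction b using Int.induction_on with
  | zero => exact ⟨1, one_mem _, by simp [gcomm]⟩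
  | succ i ih =>
    obtain ⟨z, hz, heq⟩ := ih
    have hX : gcomm c (w^(i:ℤ)) ∈ (⊤ : Subgroup G).lowerCentralSeries (j+1) := gcomm_mem hc _
    refine ⟨z * gcomm (gcomm c (w^(i:ℤ))) w,
      mul_mem hz (gcomm_mem hX w), ?_⟩
    have h1 : gcomm c (w^((i:ℤ)+1))
        = gcomm c w * (gcomm c (w^(i:ℤ)) * gcomm (gcomm c (w^(i:ℤ))) w) := by
      simp only [gcomm]; group
    rw [h1]
    nth_rewrite 1 [heq]
    group
  | pred i ih =>
    obtain ⟨z, hz, heq⟩ := ih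
    set Y := gcomm c (w^(-(i:ℤ)-1)) with hYdef
    have hY : Y ∈ (⊤ : Subgroup G).lowerCentralSeries (j+1) := gcomm_mem hc _
    refine ⟨z * (gcomm Y w)⁻¹, mul_mem hz (inv_mem (gcomm_mem hY w)), ?_⟩
    have h1 : gcomm c (w^(-(i:ℤ)))
        = gcomm c w * (Y * gcomm Y w) := by
      have hw : w^(-(i:ℤ)) = w^(-(i:ℤ)-1) * w := by group
      rw [hw, hYdef]
      simp only [gcomm]; group
    have h2 : gcomm c w * (Y * gcomm Y w) = (gcomm c w)^(-(i:ℤ)) * z := h1 ▸ heq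
    have key : ∀ E : G, gcomm c w * (Y * E) = (gcomm c w)^(-(i:ℤ)) * z →
        Y = (gcomm c w)^(-(i:ℤ)-1) * (z * E⁻¹) := by
      intro E hE
      have h3 : Y = (gcomm c w)⁻¹ * ((gcomm c w)^(-(i:ℤ)) * z) * E⁻¹ := by
        rw [← hE]; group
      rw [h3]; group
    exact key _ h2

lemma comm_zpow_left {j : ℕ} {c : G} (hc : c ∈ (⊤ : Subgroup G).lowerCentralSeries j) (w : G) (b : ℤ) :
    ∃ z ∈ (⊤ : Subgroup G).lowerCentralSeries (j+2), gcomm (c^b) w = (gcomm c w)^b * z := by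
  induction b using Int.induction_on with
  | zero => exact ⟨1, one_mem _, by simp [gcomm]⟩
  | succ i ih =>
    obtain ⟨z, hz, heq⟩ := ih
    have hu : gcomm c w ∈ (⊤ : Subgroup G).lowerCentralSeries (j+1) := gcomm_mem hc w
    refine ⟨(gcomm c w)⁻¹ * (gcomm ((gcomm c w)^(i:ℤ)) c * (c⁻¹ * z * c)) * (gcomm c w),
      ?_, ?_⟩
    · have m1 : gcomm ((gcomm c w)^(i:ℤ)) c ∈ (⊤ : Subgroup G).lowerCentralSeries (j+2) :=
        gcomm_mem (zpow_mem hu _) c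
      have m2 : c⁻¹ * z * c ∈ (⊤ : Subgroup G).lowerCentralSeries (j+2) := by
        simpa using (Subgroup.lowerCentralSeries_normal (⊤ : Subgroup G) (j+2)).conj_mem z hz c⁻¹
      have := (Subgroup.lowerCentralSeries_normal (⊤ : Subgroup G) (j+2)).conj_mem _ (mul_mem m1 m2) (gcomm c w)⁻¹
      simpa [mul_assoc] using this
    · have h1 : gcomm (c^((i:ℤ)+1)) w = c⁻¹ * gcomm (c^(i:ℤ)) w * c * gcomm c w := by
        have hc1 : c^((i:ℤ)+1) = c^(i:ℤ) * c := by group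
        rw [hc1]; simp only [gcomm]; group
      rw [h1, heq]
      generalize gcomm c w = u
      simp only [gcomm]; group
  | pred i ih =>
    obtain ⟨z, hz, heq⟩ := ih
    set Y := gcomm (c^(-(i:ℤ)-1)) w with hYdef
    have hu : gcomm c w ∈ (⊤ : Subgroup G).lowerCentralSeries (j+1) := gcomm_mem hc w
    refine ⟨gcomm ((gcomm c w)^(-(i:ℤ)-1)) c⁻¹ * (c * (gcomm c w * z * (gcomm c w)⁻¹) * c⁻¹),
      ?_, ?_⟩
    · have m1 : gcomm ((gcomm c w)^(-(i:ℤ)-1)) c⁻¹ ∈ (⊤ : Subgroup G).lowerCentralSeries (j+2) :=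
        gcomm_mem (zpow_mem hu _) c⁻¹
      have m2 := (Subgroup.lowerCentralSeries_normal (⊤ : Subgroup G) (j+2)).conj_mem _
        ((Subgroup.lowerCentralSeries_normal (⊤ : Subgroup G) (j+2)).conj_mem z hz (gcomm c w)) c
      exact mul_mem m1 m2
    · have h1 : gcomm (c^(-(i:ℤ))) w = c⁻¹ * Y * c * gcomm c w := by
        have hc1 : c^(-(i:ℤ)) = c^(-(i:ℤ)-1) * c := by group
        rw [hc1, hYdef]; simp only [gcomm]; group
      have h2 : c⁻¹ * Y * c * gcomm c w = (gcomm c w)^(-(i:ℤ)) * z := h1 ▸ heq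
      have h3 : Y = c * ((gcomm c w)^(-(i:ℤ)) * z) * (gcomm c w)⁻¹ * c⁻¹ := by
        rw [← h2]; group
      rw [h3]
      generalize gcomm c w = u
      simp only [gcomm]; group

lemma comm_mul_left {j : ℕ} {c z : G} (hc : c ∈ (⊤ : Subgroup G).lowerCentralSeries j)
    (hz : z ∈ (⊤ : Subgroup G).lowerCentralSeries (j+1)) (w : G) :
    ∃ z' ∈ (⊤ : Subgroup G).lowerCentralSeries (j+2), gcomm (c*z) w = gcomm c w * z' := by
  refine ⟨gcomm (gcomm c w) z * gcomm z w,
    mul_mem (gcomm_mem (gcomm_mem hc w) z) (gcomm_mem hz w), ?_⟩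
  simp only [gcomm]; group

lemma step_lemma {j : ℕ} {u z : G} (hu : u ∈ (⊤ : Subgroup G).lowerCentralSeries j)
    (hz : z ∈ (⊤ : Subgroup G).lowerCentralSeries (j+1)) (w : G) (b c : ℤ) :
    ∃ E ∈ (⊤ : Subgroup G).lowerCentralSeries (j+2), gcomm (u^b * z) (w^c) = (gcomm u w)^(b*c) * E := by
  obtain ⟨e1, he1, h1⟩ := comm_mul_left (zpow_mem hu b) hz (w^c)
  obtain ⟨e2, he2, h2⟩ := comm_zpow_right (zpow_mem hu b) w c
  obtain ⟨e3, he3, h3⟩ := comm_zpow_left hu w b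
  haveI : ((⊤ : Subgroup G).lowerCentralSeries (j+2)).Normal := Subgroup.lowerCentralSeries_normal (⊤ : Subgroup G) (j+2)
  obtain ⟨e4, he4, h4⟩ := pow_mul_mem ((⊤ : Subgroup G).lowerCentralSeries (j+2)) he3 ((gcomm u w)^b) c
  refine ⟨e4 * (e2 * e1), mul_mem he4 (mul_mem he2 he1), ?_⟩
  calc gcomm (u^b * z) (w^c) = gcomm (u^b) (w^c) * e1 := h1
    _ = ((gcomm (u^b) w)^c * e2) * e1 := by rw [h2]
    _ = (((gcomm u w)^b * e3)^c * e2) * e1 := by rw [h3]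
    _ = ((((gcomm u w)^b)^c * e4) * e2) * e1 := by rw [h4]
    _ = (gcomm u w)^(b*c) * (e4 * (e2 * e1)) := by rw [← zpow_mul]; group

lemma main' (l : List (G × ℤ)) : ∀ (j : ℕ) (u z : G),
    u ∈ (⊤ : Subgroup G).lowerCentralSeries j → z ∈ (⊤ : Subgroup G).lowerCentralSeries (j+1) → ∀ b : ℤ,
    ∃ z' ∈ (⊤ : Subgroup G).lowerCentralSeries (j + l.length + 1),
      commList (u^b * z) (l.map fun p => p.1 ^ p.2)
        = (commList u (l.map Prod.fst)) ^ (b * (l.map Prod.snd).prod) * z' := by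
  induction l with
  | nil =>
    intro j u z hu hz b
    exact ⟨z, by simpa using hz, by simp [commList]⟩
  | cons p t ih =>
    intro j u z hu hz b
    obtain ⟨w, c⟩ := p
    obtain ⟨E, hE, hStep⟩ := step_lemma hu hz w b c
    obtain ⟨z', hz', hRec⟩ := ih (j+1) (gcomm u w) E (gcomm_mem hu w) hE (b*c)
    have hlen : (j+1) + t.length + 1 = j + (t.length + 1) + 1 := by omega
    rw [hlen] at hz'
    refine ⟨z', by simpa using hz', ?_⟩
    simp only [List.map_cons, List.prod_cons, commList, List.foldl_cons] at hRec ⊢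
    rw [hStep, hRec, ← mul_assoc b c]

end Aux

theorem stmt10 {G : Type*} [Group G] (n : ℕ) (hn : 1 < n)
    (h : (⊤ : Subgroup G).lowerCentralSeries n = ⊥)
    (g : Fin n → G) (a : Fin n → ℤ) :
    listComm (List.ofFn (fun i => g i ^ a i))
      = (listComm (List.ofFn g)) ^ (∏ i, a i) := by
  obtain ⟨m, rfl⟩ : ∃ m, n = m + 1 := ⟨n - 1, by omega⟩
  have h0 : g 0 ∈ (⊤ : Subgroup G).lowerCentralSeries 0 := by
    rw [Subgroup.lowerCentralSeries_zero]; exact Subgroup.mem_top _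
  obtain ⟨z', hz', heq⟩ := main' (List.ofFn (fun i : Fin m => (g i.succ, a i.succ)))
    0 (g 0) 1 h0 (one_mem _) (a 0)
  have hz1 : z' = 1 := by
    have hmem : z' ∈ (⊤ : Subgroup G).lowerCentralSeries (m + 1) := by simpa using hz'
    rw [h] at hmem; simpa using hmem
  rw [hz1, mul_one, mul_one] at heq
  simp only [List.map_ofFn, Function.comp_def, List.prod_ofFn] at heq
  rw [List.ofFn_succ (f := fun i => g i ^ a i), List.ofFn_succ (f := g), listComm_cons, listComm_cons,
    Fin.prod_univ_succ]
  exact heq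
end

section
/- Let G be a nilpotent group of class at most n+1 that is not (n+1)-abelian in the Engel sense: there exist x, g ∈ G with [x, g, g, …, g] (g repeated n times) ≠ 1. Then the map e' : Gⁿ → G defined by e'(g₁,…,g_n) = [x, g₁,…,g_n] is multilinear and non-degenerate, i.e., e'(g₁^{a₁},…,g_n^{a_n}) = e'(g₁,…,g_n)^{a₁⋯a_n} for all integers aᵢ, and e'(g,…,g) ≠ 1 for some g ∈ G. -/
section Aux

open Subgroup
open scoped commutatorElement

variable {G : Type*} [Group G]

lemma gcomm_eq_commutatorElement (a b : G) : gcomm a b = ⁅a⁻¹, b⁻¹⁆ := by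
  simp [gcomm, commutatorElement_def]

lemma gcomm_mem_s12 {H K : Subgroup G} {a b : G} (ha : a ∈ H) (hb : b ∈ K) :
    gcomm a b ∈ ⁅H, K⁆ := by
  rw [gcomm_eq_commutatorElement]
  exact commutator_mem_commutator (inv_mem ha) (inv_mem hb)

lemma gcomm_eq_inv (a b : G) : gcomm a b = (gcomm b a)⁻¹ := by
  simp [gcomm]; group

lemma commList_cons (a g : G) (l : List G) :
    commList a (g :: l) = commList (gcomm a g) l := rfl

/-- Three subgroups lemma, relative version. -/
lemma three_subgroups {H₁ H₂ H₃ N : Subgroup G} [hN : N.Normal]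
    (h1 : ⁅⁅H₂, H₃⁆, H₁⁆ ≤ N) (h2 : ⁅⁅H₃, H₁⁆, H₂⁆ ≤ N) : ⁅⁅H₁, H₂⁆, H₃⁆ ≤ N := by
  let f := QuotientGroup.mk' N
  have key : ∀ {A B C : Subgroup G}, ⁅⁅A, B⁆, C⁆ ≤ N ↔
      ⁅⁅Subgroup.map f A, Subgroup.map f B⁆, Subgroup.map f C⁆ = ⊥ := by
    intro A B C
    rw [← Subgroup.map_commutator, ← Subgroup.map_commutator, Subgroup.map_eq_bot_iff,
      QuotientGroup.ker_mk']
  rw [key]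
  exact Subgroup.commutator_commutator_eq_bot_of_rotate (key.mp h1) (key.mp h2)

lemma lcs_succ (i : ℕ) :
    (⊤ : Subgroup G).lowerCentralSeries (i + 1) = ⁅(⊤ : Subgroup G).lowerCentralSeries i, (⊤ : Subgroup G)⁆ := rfl

lemma lcs_comm : ∀ (j i : ℕ),
    ⁅(⊤ : Subgroup G).lowerCentralSeries i, (⊤ : Subgroup G).lowerCentralSeries j⁆ ≤ (⊤ : Subgroup G).lowerCentralSeries (i + j + 1)
  | 0, i => by
    rw [Subgroup.lowerCentralSeries_zero]
    exact le_of_eq (lcs_succ i).symm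
  | (j + 1), i => by
    rw [Subgroup.commutator_comm, lcs_succ j]
    apply three_subgroups
    · calc ⁅⁅(⊤ : Subgroup G), (⊤ : Subgroup G).lowerCentralSeries i⁆, (⊤ : Subgroup G).lowerCentralSeries j⁆
          = ⁅⁅(⊤ : Subgroup G).lowerCentralSeries i, ⊤⁆, (⊤ : Subgroup G).lowerCentralSeries j⁆ := by
            rw [Subgroup.commutator_comm (⊤ : Subgroup G)]
        _ = ⁅(⊤ : Subgroup G).lowerCentralSeries (i + 1), (⊤ : Subgroup G).lowerCentralSeries j⁆ := by
            rw [← lcs_succ]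
        _ ≤ (⊤ : Subgroup G).lowerCentralSeries (i + 1 + j + 1) := lcs_comm j (i + 1)
        _ = (⊤ : Subgroup G).lowerCentralSeries (i + (j + 1) + 1) := by ring_nf
    · calc ⁅⁅(⊤ : Subgroup G).lowerCentralSeries i, (⊤ : Subgroup G).lowerCentralSeries j⁆, (⊤ : Subgroup G)⁆
          ≤ ⁅(⊤ : Subgroup G).lowerCentralSeries (i + j + 1), (⊤ : Subgroup G)⁆ :=
            Subgroup.commutator_mono (lcs_comm j i) le_rfl
        _ = (⊤ : Subgroup G).lowerCentralSeries (i + j + 1 + 1) := (lcs_succ _).symm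
        _ = (⊤ : Subgroup G).lowerCentralSeries (i + (j + 1) + 1) := by ring_nf

lemma gcomm_mem_lcs {i : ℕ} {a : G} (ha : a ∈ (⊤ : Subgroup G).lowerCentralSeries i) (b : G) :
    gcomm a b ∈ (⊤ : Subgroup G).lowerCentralSeries (i + 1) := by
  rw [lcs_succ]
  exact gcomm_mem_s12 ha (Subgroup.mem_top b)

lemma gcomm_mem_lcs' {j : ℕ} (a : G) {b : G} (hb : b ∈ (⊤ : Subgroup G).lowerCentralSeries j) :
    gcomm a b ∈ (⊤ : Subgroup G).lowerCentralSeries (j + 1) := by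
  rw [gcomm_eq_inv]
  exact inv_mem (gcomm_mem_lcs hb a)

variable {n : ℕ} (h : (⊤ : Subgroup G).lowerCentralSeries (n + 1) = ⊥)
include h

lemma dead {j : ℕ} {y : G} (hy : y ∈ (⊤ : Subgroup G).lowerCentralSeries j) (hj : n + 1 ≤ j) : y = 1 := by
  have := Subgroup.lowerCentralSeries_antitone ⊤ hj hy
  rwa [h, Subgroup.mem_bot] at this

/-- Absorption on the right: a deep factor does not change the iterated commutator. -/
lemma absorb_right : ∀ (l : List G) (a w : G) (j : ℕ),
    w ∈ (⊤ : Subgroup G).lowerCentralSeries j → n + 1 ≤ j + l.length →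
    commList (a * w) l = commList a l
  | [], a, w, j, hw, hj => by
    rw [dead h hw (by simpa using hj)]; simp [commList]
  | (g :: l), a, w, j, hw, hj => by
    have key : gcomm (a * w) g = gcomm a g * (gcomm (gcomm a g) w * gcomm w g) := by
      unfold gcomm; group
    have hw1 : gcomm (gcomm a g) w * gcomm w g ∈ (⊤ : Subgroup G).lowerCentralSeries (j + 1) :=
      mul_mem (gcomm_mem_lcs' _ hw) (gcomm_mem_lcs hw g)
    rw [commList_cons, commList_cons, key]
    exact absorb_right l (gcomm a g) _ (j + 1) hw1 (by simp at hj ⊢; omega)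

/-- Absorption on the left. -/
lemma absorb_left (l : List G) (a w : G) (j : ℕ)
    (hw : w ∈ (⊤ : Subgroup G).lowerCentralSeries j) (hj : n + 1 ≤ j + l.length) :
    commList (w * a) l = commList a l := by
  have : w * a = a * (a⁻¹ * w * a) := by group
  rw [this]
  refine absorb_right h l a _ j ?_ hj
  have : a⁻¹ * w * a = a⁻¹ * w * a⁻¹⁻¹ := by group
  rw [this]
  exact (inferInstance : ((⊤ : Subgroup G).lowerCentralSeries j).Normal).conj_mem w hw a⁻¹

/-- Splitting a product of two sufficiently deep elements. -/
lemma split : ∀ (l : List G) (i j : ℕ) (a b : G),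
    a ∈ (⊤ : Subgroup G).lowerCentralSeries i → b ∈ (⊤ : Subgroup G).lowerCentralSeries j →
    n + 1 ≤ i + j + l.length →
    commList (a * b) l = commList a l * commList b l
  | [], _, _, _, _, _, _, _ => rfl
  | (g :: l), i, j, a, b, ha, hb, hj => by
    have key : gcomm (a * b) g = gcomm a g * (gcomm (gcomm a g) b * gcomm b g) := by
      unfold gcomm; group
    have ha' : gcomm a g ∈ (⊤ : Subgroup G).lowerCentralSeries (i + 1) := gcomm_mem_lcs ha g
    have hb' : gcomm b g ∈ (⊤ : Subgroup G).lowerCentralSeries (j + 1) := gcomm_mem_lcs hb g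
    have he : gcomm (gcomm a g) b ∈ (⊤ : Subgroup G).lowerCentralSeries (i + j + 2) := by
      have := lcs_comm j (i + 1) (gcomm_mem_s12 ha' hb)
      have h2 : i + 1 + j + 1 = i + j + 2 := by ring
      rwa [h2] at this
    have heb : gcomm (gcomm a g) b * gcomm b g ∈ (⊤ : Subgroup G).lowerCentralSeries (j + 1) :=
      mul_mem (Subgroup.lowerCentralSeries_antitone ⊤ (by omega) he) hb'
    rw [commList_cons, commList_cons, commList_cons, key]
    rw [split l (i + 1) (j + 1) _ _ ha' heb (by simp at hj ⊢; omega)]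
    congr 1
    exact absorb_left h l (gcomm b g) _ (i + j + 2) he (by simp at hj ⊢; omega)

/-- Anti-multiplicativity in the first slot. -/
lemma slot_mul (l : List G) (k : ℕ) (y b c : G) (hy : y ∈ (⊤ : Subgroup G).lowerCentralSeries k)
    (hk : n ≤ k + 1 + l.length) :
    commList y ((b * c) :: l) = commList y (c :: l) * commList y (b :: l) := by
  have key : gcomm y (b * c) = gcomm y c * gcomm y b * gcomm (gcomm y b) c := by
    unfold gcomm; group
  have hc : gcomm y c ∈ (⊤ : Subgroup G).lowerCentralSeries (k + 1) := gcomm_mem_lcs hy c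
  have hb : gcomm y b ∈ (⊤ : Subgroup G).lowerCentralSeries (k + 1) := gcomm_mem_lcs hy b
  have hw : gcomm (gcomm y b) c ∈ (⊤ : Subgroup G).lowerCentralSeries (k + 2) := gcomm_mem_lcs hb c
  rw [commList_cons, commList_cons, commList_cons, key]
  rw [absorb_right h l _ _ (k + 2) hw (by omega)]
  exact split h l (k + 1) (k + 1) _ _ hc hb (by omega)

/-- Integer powers in the first slot. -/
lemma slot_zpow (l : List G) (k : ℕ) (y b : G) (a : ℤ) (hy : y ∈ (⊤ : Subgroup G).lowerCentralSeries k)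
    (hk : n ≤ k + 1 + l.length) :
    commList y ((b ^ a) :: l) = (commList y (b :: l)) ^ a := by
  let φ : G →* Gᵐᵒᵖ := MonoidHom.mk' (fun c => MulOpposite.op (commList y (c :: l)))
    (fun b c => by
      rw [slot_mul h l k y b c hy hk, MulOpposite.op_mul])
  have := map_zpow φ b a
  simpa [φ, MonoidHom.mk'] using congrArg MulOpposite.unop this

lemma multilinear : ∀ (m : ℕ) (k : ℕ) (y : G), y ∈ (⊤ : Subgroup G).lowerCentralSeries k → n ≤ k + m →
    ∀ (g : Fin m → G) (a : Fin m → ℤ),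
    commList y (List.ofFn (fun i => g i ^ a i)) = (commList y (List.ofFn g)) ^ (∏ i, a i)
  | 0, k, y, hy, hk, g, a => by simp [commList]
  | (m + 1), k, y, hy, hk, g, a => by
    rw [List.ofFn_succ, List.ofFn_succ]
    have hlen : (List.ofFn fun i : Fin m => g i.succ ^ a i.succ).length = m := by simp
    rw [slot_zpow h _ k y (g 0) (a 0) hy (by omega)]
    rw [commList_cons, commList_cons]
    rw [multilinear m (k + 1) (gcomm y (g 0)) (gcomm_mem_lcs hy (g 0)) (by omega)
      (fun i => g i.succ) (fun i => a i.succ)]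
    rw [← zpow_mul, Fin.prod_univ_succ, mul_comm (a 0)]

end Aux

theorem stmt12 {G : Type*} [Group G] (n : ℕ)
    (h : (⊤ : Subgroup G).lowerCentralSeries (n + 1) = ⊥)
    (x g₀ : G) (hx : commList x (List.replicate n g₀) ≠ 1) :
    (∀ (g : Fin n → G) (a : Fin n → ℤ),
        commList x (List.ofFn (fun i => g i ^ a i))
          = (commList x (List.ofFn g)) ^ (∏ i, a i)) ∧
      ∃ g : G, commList x (List.replicate n g) ≠ 1 := by
  refine ⟨fun g a => ?_, ⟨g₀, hx⟩⟩
  exact multilinear h n 0 x (by simp [Subgroup.lowerCentralSeries_zero]) (by omega) g a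
end
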